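/- For any two real symmetric m×m matrices A and B, one has 2‖[A,B]‖² ≤ (‖A‖² + ‖B‖²)², where ‖·‖ is the Frobenius norm. (This is the DDVV inequality in matrix form for codimension two.) -/

import Mathlib

open Matrix Finset

/-- Frobenius norm squared of a real matrix. -/
def frob2 {m : ℕ} (M : Matrix (Fin m) (Fin m) ℝ) : ℝ :=
  ∑ i, ∑ j, (M i j) ^ 2

lemma frob2_nonneg {m : ℕ} (M : Matrix (Fin m) (Fin m) ℝ) : 0 ≤ frob2 M := by
  refine Finset.sum_nonneg fun i _ => Finset.sum_nonneg fun j _ => sq_nonneg _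

lemma frob2_eq_trace {m : ℕ} (M : Matrix (Fin m) (Fin m) ℝ) :
    frob2 M = Matrix.trace (M * Mᵀ) := by
  simp [frob2, Matrix.trace, Matrix.diag, Matrix.mul_apply, sq]

lemma frob2_conj {m : ℕ} (U M : Matrix (Fin m) (Fin m) ℝ)
    (h1 : U * Uᵀ = 1) (h2 : Uᵀ * U = 1) :
    frob2 (Uᵀ * M * U) = frob2 M := by
  rw [frob2_eq_trace, frob2_eq_trace]
  have e1 : (Uᵀ * M * U) * (Uᵀ * M * U)ᵀ = Uᵀ * (M * (U * Uᵀ) * Mᵀ) * U := by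
    simp only [Matrix.transpose_mul, Matrix.transpose_transpose]
    noncomm_ring
  rw [e1, h1, Matrix.mul_one]
  calc Matrix.trace (Uᵀ * (M * Mᵀ) * U) = Matrix.trace (U * Uᵀ * (M * Mᵀ)) := by
        rw [Matrix.trace_mul_cycle]
    _ = Matrix.trace (M * Mᵀ) := by rw [h1, one_mul]

/-- Böttcher–Wenzel bound in the diagonal case. -/
lemma diag_comm_bound {m : ℕ} (lam : Fin m → ℝ) (B : Matrix (Fin m) (Fin m) ℝ) :
    frob2 (Matrix.diagonal lam * B - B * Matrix.diagonal lam)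
      ≤ 2 * (∑ k, (lam k) ^ 2) * frob2 B := by
  have hD : ∀ i j, (Matrix.diagonal lam * B - B * Matrix.diagonal lam) i j
      = (lam i - lam j) * B i j := by
    intro i j
    simp only [Matrix.sub_apply, Matrix.diagonal_mul, Matrix.mul_diagonal]
    ring
  have key : ∀ i j : Fin m, ((lam i - lam j) * B i j) ^ 2
      ≤ 2 * (∑ k, (lam k) ^ 2) * (B i j) ^ 2 := by
    intro i j
    rcases eq_or_ne i j with rfl | hij
    · simp only [sub_self, zero_mul, ne_eq]
      rw [zero_pow (by norm_num)]
      positivity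
    · have h1 : lam i ^ 2 + lam j ^ 2 ≤ ∑ k, (lam k) ^ 2 := by
        have : ({i, j} : Finset (Fin m)).sum (fun k => lam k ^ 2) ≤ ∑ k, lam k ^ 2 :=
          Finset.sum_le_sum_of_subset_of_nonneg (Finset.subset_univ _)
            (fun k _ _ => sq_nonneg _)
        rwa [Finset.sum_pair hij] at this
      nlinarith [sq_nonneg (lam i + lam j), sq_nonneg (B i j), sq_nonneg ((lam i - lam j) * B i j)]
  calc frob2 (Matrix.diagonal lam * B - B * Matrix.diagonal lam)
      = ∑ i, ∑ j, ((lam i - lam j) * B i j) ^ 2 := by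
        unfold frob2; exact Finset.sum_congr rfl fun i _ =>
          Finset.sum_congr rfl fun j _ => by rw [hD]
    _ ≤ ∑ i, ∑ j, 2 * (∑ k, (lam k) ^ 2) * (B i j) ^ 2 :=
        Finset.sum_le_sum fun i _ => Finset.sum_le_sum fun j _ => key i j
    _ = 2 * (∑ k, (lam k) ^ 2) * frob2 B := by
        simp only [frob2, Finset.mul_sum]

/-- DDVV inequality in matrix form for codimension two:
for real symmetric matrices, 2‖[A,B]‖² ≤ (‖A‖² + ‖B‖²)². -/
theorem ddvv_codim_two {m : ℕ} (A B : Matrix (Fin m) (Fin m) ℝ)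
    (hA : A.IsSymm) (hB : B.IsSymm) :
    2 * frob2 (A * B - B * A) ≤ (frob2 A + frob2 B) ^ 2 := by
  have hAH : A.IsHermitian := by
    rwa [Matrix.IsHermitian, Matrix.conjTranspose_eq_transpose_of_trivial]
  set U : Matrix (Fin m) (Fin m) ℝ := (hAH.eigenvectorUnitary : Matrix (Fin m) (Fin m) ℝ) with hUdef
  have hstar : star U = Uᵀ := by
    rw [Matrix.star_eq_conjTranspose, Matrix.conjTranspose_eq_transpose_of_trivial]
  have h1 : U * Uᵀ = 1 := by
    rw [← hstar]
    have := Unitary.coe_mul_star_self hAH.eigenvectorUnitary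
    rwa [Unitary.coe_star] at this
  have h2 : Uᵀ * U = 1 := by
    rw [← hstar]
    exact Unitary.coe_star_mul_self hAH.eigenvectorUnitary
  set lam : Fin m → ℝ := hAH.eigenvalues with hlam
  have hspec : A = U * Matrix.diagonal lam * Uᵀ := by
    have := hAH.spectral_theorem
    rw [Unitary.conjStarAlgAut_apply, ← hUdef, hstar] at this
    simpa [Function.comp] using this
  set B' : Matrix (Fin m) (Fin m) ℝ := Uᵀ * B * U with hB'
  have hfA : frob2 A = ∑ k, (lam k) ^ 2 := by
    have hDiag : Uᵀ * A * U = Matrix.diagonal lam := by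
      rw [hspec]
      calc Uᵀ * (U * Matrix.diagonal lam * Uᵀ) * U
          = (Uᵀ * U) * Matrix.diagonal lam * (Uᵀ * U) := by noncomm_ring
        _ = Matrix.diagonal lam := by rw [h2, one_mul, mul_one]
    have h4 := frob2_conj U A h1 h2
    rw [hDiag] at h4
    rw [← h4]
    unfold frob2
    refine Finset.sum_congr rfl fun i _ => ?_
    rw [Finset.sum_eq_single i]
    · simp
    · intro b _ hb
      rw [Matrix.diagonal_apply_ne _ (Ne.symm hb)]
      simp
    · intro h; exact absurd (Finset.mem_univ i) h
  have hfB : frob2 B = frob2 B' := (frob2_conj U B h1 h2).symm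
  have hcomm : Uᵀ * (A * B - B * A) * U
      = Matrix.diagonal lam * B' - B' * Matrix.diagonal lam := by
    rw [hspec, hB']
    calc Uᵀ * (U * Matrix.diagonal lam * Uᵀ * B - B * (U * Matrix.diagonal lam * Uᵀ)) * U
        = (Uᵀ * U) * Matrix.diagonal lam * (Uᵀ * B * U)
          - (Uᵀ * B * U) * Matrix.diagonal lam * (Uᵀ * U) := by noncomm_ring
      _ = Matrix.diagonal lam * (Uᵀ * B * U) - (Uᵀ * B * U) * Matrix.diagonal lam := by
          rw [h2, one_mul, mul_one]
  have hfC : frob2 (A * B - B * A)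
      = frob2 (Matrix.diagonal lam * B' - B' * Matrix.diagonal lam) := by
    rw [← hcomm, frob2_conj _ _ h1 h2]
  have hbound := diag_comm_bound lam B'
  have hfA' : (0:ℝ) ≤ frob2 A := frob2_nonneg A
  have hfB' : (0:ℝ) ≤ frob2 B := frob2_nonneg B
  have hmain : frob2 (A * B - B * A) ≤ 2 * frob2 A * frob2 B := by
    rw [hfC, hfA, hfB]; exact hbound
  nlinarith [sq_nonneg (frob2 A - frob2 B)]
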